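/- (Cauchy determinant.) For indeterminates x_1,…,x_n and y_1,…,y_n, det[ 1/(1 − x_i y_j) ]_{1≤i,j≤n} = Δ(x)_n Δ(y)_n / ∏_{i,j=1}^{n} (1 − x_i y_j), as an identity of rational functions. -/

import Mathlib

noncomputable section

open scoped BigOperators

/-- **Cauchy determinant.**  For indeterminates `x₁,…,xₙ` and `y₁,…,yₙ` (here: elements of a
field such that all denominators are nonzero),
`det[1/(1 - xᵢ yⱼ)] = Δ(x) Δ(y) / ∏_{i,j} (1 - xᵢ yⱼ)`,
where `Δ(x) = ∏_{i<j} (xᵢ - xⱼ)`. -/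
theorem cauchy_determinant {K : Type*} [Field K] (n : ℕ) (x y : Fin n → K)
    (h : ∀ i j, x i * y j ≠ 1) :
    (Matrix.of fun i j : Fin n => 1 / (1 - x i * y j)).det =
      (∏ i : Fin n, ∏ j ∈ Finset.Ioi i, (x i - x j)) *
        (∏ i : Fin n, ∏ j ∈ Finset.Ioi i, (y i - y j)) /
        ∏ i : Fin n, ∏ j : Fin n, (1 - x i * y j) := by
  induction n with
  | zero => simp
  | succ n ih =>
    have hne : ∀ i j, (1 : K) - x i * y j ≠ 0 :=
      fun i j => sub_ne_zero_of_ne (Ne.symm (h i j))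
    -- Step 1: subtract row 0 from every other row
    set B : Matrix (Fin (n+1)) (Fin (n+1)) K := Matrix.of fun i j =>
      if i = 0 then 1 / (1 - x 0 * y j)
      else ((x i - x 0) * y j) / ((1 - x i * y j) * (1 - x 0 * y j)) with hB
    have step1 : (Matrix.of fun i j : Fin (n+1) => 1 / (1 - x i * y j)).det = B.det := by
      refine Matrix.det_eq_of_forall_row_eq_smul_add_const
        (fun i => if i = 0 then 0 else 1) 0 (by simp) fun i j => ?_
      by_cases hi : i = 0
      · subst hi; simp [hB]
      · simp only [hB, Matrix.of_apply, if_neg hi, if_pos rfl]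
        rw [if_true]
        field_simp [hne i j, hne 0 j]
        have h0' : 1 - y j * x 0 ≠ 0 := by rw [mul_comm]; exact hne 0 j
        field_simp
        ring
    -- Step 2: factor 1/(1 - x 0 * y j) out of column j
    set C : Matrix (Fin (n+1)) (Fin (n+1)) K := Matrix.of fun i j =>
      if i = 0 then 1 else ((x i - x 0) * y j) / (1 - x i * y j) with hC
    have step2 : B.det = (∏ j, 1 / (1 - x 0 * y j)) * C.det := by
      have : B = Matrix.of fun i j => (1 / (1 - x 0 * y j)) * C i j := by
        ext i j
        by_cases hi : i = 0
        · simp [hB, hC, hi]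
        · simp only [hB, hC, Matrix.of_apply, if_neg hi]
          rw [div_mul_div_comm, one_mul, mul_comm (1 - x 0 * y j)]
      rw [this, Matrix.det_mul_row]
    -- Step 3: factor (x i - x 0) out of row i
    set D : Matrix (Fin (n+1)) (Fin (n+1)) K := Matrix.of fun i j =>
      if i = 0 then 1 else y j / (1 - x i * y j) with hD
    have step3 : C.det = (∏ i, if i = 0 then (1:K) else x i - x 0) * D.det := by
      have : C = Matrix.of fun i j =>
          (if i = 0 then (1:K) else x i - x 0) * D i j := by
        ext i j
        by_cases hi : i = 0
        · simp [hC, hD, hi]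
        · simp only [hC, hD, Matrix.of_apply, if_neg hi]
          ring
      rw [this, Matrix.det_mul_column]
    -- Step 4: subtract column 0 from every other column
    set E : Matrix (Fin (n+1)) (Fin (n+1)) K := Matrix.of fun i j =>
      if i = 0 then (if j = 0 then (1:K) else 0)
      else if j = 0 then y 0 / (1 - x i * y 0)
      else (y j - y 0) / ((1 - x i * y j) * (1 - x i * y 0)) with hE
    have step4 : D.det = E.det := by
      rw [← Matrix.det_transpose D, ← Matrix.det_transpose E]
      refine Matrix.det_eq_of_forall_row_eq_smul_add_const
        (fun j => if j = 0 then 0 else 1) 0 (by simp) fun j i => ?_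
      simp only [Matrix.transpose_apply, hD, hE, Matrix.of_apply]
      by_cases hi : i = 0
      · by_cases hj : j = 0 <;> simp [hi, hj]
      · by_cases hj : j = 0
        · simp [hi, hj]
        · simp only [if_neg hi, if_neg hj, if_pos rfl, mul_ite, mul_one]
          rw [if_true]
          field_simp [hne i j, hne i 0]
          have h0' : 1 - y 0 * x i ≠ 0 := by rw [mul_comm]; exact hne i 0
          have h1' : 1 - y j * x i ≠ 0 := by rw [mul_comm]; exact hne i j
          field_simp
          ring
    -- Step 5: expand along row 0
    have step5 : E.det = (E.submatrix Fin.succ Fin.succ).det := by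
      rw [Matrix.det_succ_row_zero, Finset.sum_eq_single_of_mem 0 (Finset.mem_univ 0)]
      · simp [hE, Fin.succAbove_zero]
      · intro j _ hj
        simp [hE, hj]
    -- Step 6: factor and apply the induction hypothesis
    have step6 : (E.submatrix Fin.succ Fin.succ).det =
        (∏ j : Fin n, (y j.succ - y 0)) * ((∏ i : Fin n, 1 / (1 - x i.succ * y 0)) *
          (((∏ i : Fin n, ∏ j ∈ Finset.Ioi i, (x i.succ - x j.succ)) *
              ∏ i : Fin n, ∏ j ∈ Finset.Ioi i, (y i.succ - y j.succ)) /
            ∏ i : Fin n, ∏ j : Fin n, (1 - x i.succ * y j.succ))) := by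
      have hsub : E.submatrix Fin.succ Fin.succ = Matrix.of fun i j : Fin n =>
          (y j.succ - y 0) *
            Matrix.of (fun i j : Fin n => (1 / (1 - x i.succ * y 0)) *
              Matrix.of (fun i j : Fin n => 1 / (1 - x i.succ * y j.succ)) i j) i j := by
        ext i j
        simp only [Matrix.submatrix_apply, hE, Matrix.of_apply,
          if_neg (Fin.succ_ne_zero i), if_neg (Fin.succ_ne_zero j)]
        rw [div_eq_mul_inv, one_div, one_div, mul_inv]
        ring
      rw [hsub, Matrix.det_mul_row, Matrix.det_mul_column,
        ih (fun i => x i.succ) (fun j => y j.succ) (fun i j => h i.succ j.succ)]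
    rw [step1, step2, step3, step4, step5, step6]
    -- simplify the row-factor product
    have hx0 : (∏ i : Fin (n+1), if i = 0 then (1:K) else x i - x 0)
        = ∏ i : Fin n, (x i.succ - x 0) := by
      rw [Fin.prod_univ_succ]
      simp [Fin.succ_ne_zero]
    rw [hx0]
    -- split the products on the right-hand side
    have hDx : (∏ i : Fin (n+1), ∏ j ∈ Finset.Ioi i, (x i - x j))
        = (∏ k : Fin n, (x 0 - x k.succ)) *
          ∏ i : Fin n, ∏ j ∈ Finset.Ioi i, (x i.succ - x j.succ) := by
      rw [Fin.prod_univ_succ, Fin.prod_Ioi_zero]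
      simp only [Fin.prod_Ioi_succ]
    have hDy : (∏ i : Fin (n+1), ∏ j ∈ Finset.Ioi i, (y i - y j))
        = (∏ k : Fin n, (y 0 - y k.succ)) *
          ∏ i : Fin n, ∏ j ∈ Finset.Ioi i, (y i.succ - y j.succ) := by
      rw [Fin.prod_univ_succ, Fin.prod_Ioi_zero]
      simp only [Fin.prod_Ioi_succ]
    have hQ : (∏ i : Fin (n+1), ∏ j : Fin (n+1), (1 - x i * y j))
        = (∏ j : Fin (n+1), (1 - x 0 * y j)) *
          ((∏ i : Fin n, (1 - x i.succ * y 0)) *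
            ∏ i : Fin n, ∏ j : Fin n, (1 - x i.succ * y j.succ)) := by
      rw [Fin.prod_univ_succ, ← Finset.prod_mul_distrib]
      congr 1
      exact Finset.prod_congr rfl fun i _ => by rw [Fin.prod_univ_succ]
    rw [hDx, hDy, hQ]
    -- rewrite the products of reciprocals
    have h1 : (∏ j : Fin (n+1), 1 / (1 - x 0 * y j))
        = (∏ j : Fin (n+1), (1 - x 0 * y j))⁻¹ := by
      simp only [one_div]
      exact Finset.prod_inv_distrib _
    have h2 : (∏ i : Fin n, 1 / (1 - x i.succ * y 0))
        = (∏ i : Fin n, (1 - x i.succ * y 0))⁻¹ := by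
      simp only [one_div]
      exact Finset.prod_inv_distrib _
    rw [h1, h2]
    -- sign bookkeeping
    have hsign : (∏ k : Fin n, (x 0 - x k.succ)) * ∏ k : Fin n, (y 0 - y k.succ)
        = (∏ k : Fin n, (x k.succ - x 0)) * ∏ k : Fin n, (y k.succ - y 0) := by
      have e1 : ∏ k : Fin n, (x 0 - x k.succ)
          = (-1 : K) ^ n * ∏ k : Fin n, (x k.succ - x 0) := by
        calc ∏ k : Fin n, (x 0 - x k.succ)
            = ∏ k : Fin n, (-1 : K) * (x k.succ - x 0) :=
              Finset.prod_congr rfl fun k _ => by ring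
          _ = (-1 : K) ^ n * ∏ k : Fin n, (x k.succ - x 0) := by
              rw [Finset.prod_mul_distrib, Finset.prod_const, Finset.card_univ, Fintype.card_fin]
      have e2 : ∏ k : Fin n, (y 0 - y k.succ)
          = (-1 : K) ^ n * ∏ k : Fin n, (y k.succ - y 0) := by
        calc ∏ k : Fin n, (y 0 - y k.succ)
            = ∏ k : Fin n, (-1 : K) * (y k.succ - y 0) :=
              Finset.prod_congr rfl fun k _ => by ring
          _ = (-1 : K) ^ n * ∏ k : Fin n, (y k.succ - y 0) := by
              rw [Finset.prod_mul_distrib, Finset.prod_const, Finset.card_univ, Fintype.card_fin]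
      have hpow : ((-1 : K) ^ n) * ((-1 : K) ^ n) = 1 := by
        rw [← pow_add]; exact Even.neg_one_pow ⟨n, rfl⟩
      rw [e1, e2, mul_mul_mul_comm, hpow, one_mul]
    have key : ((∏ k : Fin n, (x 0 - x k.succ)) *
          ∏ i : Fin n, ∏ j ∈ Finset.Ioi i, (x i.succ - x j.succ)) *
        ((∏ k : Fin n, (y 0 - y k.succ)) *
          ∏ i : Fin n, ∏ j ∈ Finset.Ioi i, (y i.succ - y j.succ))
        = ((∏ k : Fin n, (x k.succ - x 0)) * ∏ k : Fin n, (y k.succ - y 0)) *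
          ((∏ i : Fin n, ∏ j ∈ Finset.Ioi i, (x i.succ - x j.succ)) *
            ∏ i : Fin n, ∏ j ∈ Finset.Ioi i, (y i.succ - y j.succ)) := by
      rw [← hsign]; ring
    rw [key]
    rw [div_eq_mul_inv, div_eq_mul_inv, mul_inv, mul_inv]
    ring
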